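/- Let α ∈ (0,1), let a < b be real numbers, and let e : ℝ → ℝ be continuous on [a,b] and continuously differentiable on [a,b) with e(a) = 0. Suppose there exist M ≥ 0 and β > α such that |e(t)| ≤ M (b − t)^β for all t ∈ [a,b], and suppose the function t ↦ e′(t) (b − t)^{−α} is integrable on [a,b]. Then the function t ↦ e(t) (b − t)^{−α−1} is integrable on [a,b] and ∫_a^b e′(t) (b − t)^{−α} dt = −α ∫_a^b e(t) (b − t)^{−α−1} dt. -/

import Mathlib

open MeasureTheory Set intervalIntegral Filter Topology Real

/-- Integration by parts on the final grid interval `[a,b]`, where the kernel `(b-t)^{-α}`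
is singular at the right endpoint: if `e` is continuous on `[a,b]`, continuously
differentiable on `[a,b)`, vanishes at `a`, and `|e(t)| ≤ M (b-t)^β` with `β > α`, and the
integrand `e'(t)(b-t)^{-α}` is integrable, then `t ↦ e(t)(b-t)^{-α-1}` is integrable and
`∫_a^b e'(t)(b-t)^{-α} dt = -α ∫_a^b e(t)(b-t)^{-α-1} dt`. -/
theorem stmt_7 (α : ℝ) (hα : α ∈ Set.Ioo (0:ℝ) 1) (a b : ℝ) (hab : a < b)
    (e : ℝ → ℝ) (hec : ContinuousOn e (Set.Icc a b))
    (he : ContDiffOn ℝ 1 e (Set.Ico a b)) (hea : e a = 0)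
    (M β : ℝ) (hM : 0 ≤ M) (hβ : α < β)
    (hbound : ∀ t ∈ Set.Icc a b, |e t| ≤ M * (b - t) ^ β)
    (hint : IntervalIntegrable (fun t => derivWithin e (Set.Ico a b) t * (b - t) ^ (-α))
      MeasureTheory.volume a b) :
    IntervalIntegrable (fun t => e t * (b - t) ^ (-α-1)) MeasureTheory.volume a b ∧
    ∫ t in a..b, derivWithin e (Set.Ico a b) t * (b - t) ^ (-α)
      = -α * ∫ t in a..b, e t * (b - t) ^ (-α-1) := by
  obtain ⟨hα0, hα1⟩ := hα
  have hne : (-α - 1 : ℝ) ≠ 0 := by linarith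
  -- dominating function
  have hbase : IntervalIntegrable (fun x : ℝ => x ^ (β - α - 1)) volume 0 (b - a) :=
    intervalIntegrable_rpow' (by linarith)
  have hdom : IntervalIntegrable (fun x : ℝ => M * (b - x) ^ (β - α - 1)) volume a b := by
    have h2 := hbase.comp_sub_left b
    simp only [sub_zero, sub_sub_cancel] at h2
    exact h2.symm.const_mul M
  -- integrability of the singular part
  have hg : IntervalIntegrable (fun t => e t * (b - t) ^ (-α-1)) volume a b := by
    apply hdom.mono_fun'
    · have hcont : ContinuousOn (fun t => e t * (b - t) ^ (-α-1)) (Ioo a b) := by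
        apply ContinuousOn.mul (hec.mono Ioo_subset_Icc_self)
        apply ContinuousOn.rpow_const (continuousOn_const.sub continuousOn_id)
        intro x hx
        exact Or.inl (sub_ne_zero.2 (ne_of_gt hx.2))
      rw [uIoc_of_le hab.le, ← Measure.restrict_congr_set Ioo_ae_eq_Ioc]
      exact hcont.aestronglyMeasurable measurableSet_Ioo
    · rw [uIoc_of_le hab.le]
      refine (ae_restrict_mem measurableSet_Ioc).mono fun x hx => ?_
      show ‖e x * (b - x) ^ (-α-1)‖ ≤ M * (b - x) ^ (β - α - 1)
      rcases eq_or_lt_of_le hx.2 with h | h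
      · have hbx0 : (b - x : ℝ) = 0 := by rw [h]; ring
        simp only [Real.norm_eq_abs, abs_mul, hbx0, Real.zero_rpow hne, abs_zero, mul_zero]
        exact mul_nonneg hM (Real.rpow_nonneg le_rfl _)
      · have hbx : (0:ℝ) < b - x := by linarith
        have h1 : ‖e x * (b - x) ^ (-α-1)‖ = |e x| * (b - x) ^ (-α-1) := by
          rw [Real.norm_eq_abs, abs_mul, abs_of_nonneg (Real.rpow_nonneg hbx.le _)]
        rw [h1]
        calc |e x| * (b - x) ^ (-α-1)
            ≤ M * (b - x) ^ β * (b - x) ^ (-α-1) :=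
              mul_le_mul_of_nonneg_right
                (hbound x ⟨hx.1.le, hx.2⟩) (Real.rpow_nonneg hbx.le _)
          _ = M * (b - x) ^ (β - α - 1) := by
              rw [mul_assoc, ← Real.rpow_add hbx]; ring_nf
  refine ⟨hg, ?_⟩
  -- integration by parts on [a, c] for c < b
  have key : ∀ c ∈ Ico a b,
      (∫ t in a..c, derivWithin e (Set.Ico a b) t * (b - t) ^ (-α))
        = e c * (b - c) ^ (-α) - α * ∫ t in a..c, e t * (b - t) ^ (-α-1) := by
    intro c hc
    have hsub : Set.uIcc a c ⊆ Set.uIcc a b := by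
      rw [uIcc_of_le hc.1, uIcc_of_le hab.le]
      exact Icc_subset_Icc le_rfl hc.2.le
    have h1 : IntervalIntegrable (fun t => derivWithin e (Set.Ico a b) t * (b - t) ^ (-α))
        volume a c := hint.mono_set hsub
    have h2 : IntervalIntegrable (fun t => α * (e t * (b - t) ^ (-α-1))) volume a c :=
      (hg.mono_set hsub).const_mul α
    have hcont : ContinuousOn (fun t => e t * (b - t) ^ (-α)) (Icc a c) := by
      apply ContinuousOn.mul (hec.mono (Icc_subset_Icc le_rfl hc.2.le))
      apply ContinuousOn.rpow_const (continuousOn_const.sub continuousOn_id)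
      intro x hx
      exact Or.inl (sub_ne_zero.2 (ne_of_gt (lt_of_le_of_lt hx.2 hc.2)))
    have hderiv : ∀ x ∈ Ioo a c, HasDerivAt (fun t => e t * (b - t) ^ (-α))
        (derivWithin e (Set.Ico a b) x * (b - x) ^ (-α)
          + α * (e x * (b - x) ^ (-α-1))) x := by
      intro x hx
      have hxm : x ∈ Ioo a b := ⟨hx.1, hx.2.trans hc.2⟩
      have hbx : (0:ℝ) < b - x := sub_pos.2 hxm.2
      have hmem : Set.Ico a b ∈ 𝓝 x :=
        Filter.mem_of_superset (isOpen_Ioo.mem_nhds hxm) Ioo_subset_Ico_self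
      have hde : HasDerivAt e (derivWithin e (Set.Ico a b) x) x :=
        ((he.differentiableOn one_ne_zero x ⟨hxm.1.le, hxm.2⟩).hasDerivWithinAt).hasDerivAt hmem
      have hu : HasDerivAt (fun t : ℝ => b - t) (-1) x := (hasDerivAt_id x).const_sub b
      have hv : HasDerivAt (fun t : ℝ => (b - t) ^ (-α)) (α * (b - x) ^ (-α - 1)) x := by
        have h := (Real.hasDerivAt_rpow_const (p := -α) (Or.inl hbx.ne')).comp x hu
        exact h.congr_deriv (by ring)
      have := hde.mul hv
      exact this.congr_deriv (by ring)
    have heq := integral_eq_sub_of_hasDerivAt_of_le hc.1 hcont hderiv (h1.add h2)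
    rw [integral_add h1 h2, intervalIntegral.integral_const_mul] at heq
    have hFa : e a * (b - a) ^ (-α) = 0 := by rw [hea]; ring
    rw [hFa, sub_zero] at heq
    linarith
  -- limits as c → b
  set l : Filter ℝ := 𝓝[Ico a b] b with hl
  have hlne : l.NeBot := by
    rw [hl, ← mem_closure_iff_nhdsWithin_neBot, closure_Ico hab.ne]
    exact ⟨hab.le, le_rfl⟩
  have hmono : l ≤ 𝓝[Icc a b] b := nhdsWithin_mono b Ico_subset_Icc_self
  have hLb : Tendsto (fun c => ∫ t in a..c, derivWithin e (Set.Ico a b) t * (b - t) ^ (-α)) l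
      (𝓝 (∫ t in a..b, derivWithin e (Set.Ico a b) t * (b - t) ^ (-α))) := by
    have := continuousOn_primitive_interval' hint left_mem_uIcc
    rw [uIcc_of_le hab.le] at this
    exact (this b ⟨hab.le, le_rfl⟩).tendsto.mono_left hmono
  have hHb : Tendsto (fun c => ∫ t in a..c, e t * (b - t) ^ (-α-1)) l
      (𝓝 (∫ t in a..b, e t * (b - t) ^ (-α-1))) := by
    have := continuousOn_primitive_interval' hg left_mem_uIcc
    rw [uIcc_of_le hab.le] at this
    exact (this b ⟨hab.le, le_rfl⟩).tendsto.mono_left hmono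
  have hbt : Tendsto (fun c => e c * (b - c) ^ (-α)) l (𝓝 0) := by
    apply squeeze_zero_norm' (a := fun c => M * (b - c) ^ (β - α))
    · filter_upwards [self_mem_nhdsWithin] with c hc
      have hbc : (0:ℝ) < b - c := sub_pos.2 hc.2
      have : ‖e c * (b - c) ^ (-α)‖ = |e c| * (b - c) ^ (-α) := by
        rw [Real.norm_eq_abs, abs_mul, abs_of_nonneg (Real.rpow_nonneg hbc.le _)]
      rw [this]
      calc |e c| * (b - c) ^ (-α)
          ≤ M * (b - c) ^ β * (b - c) ^ (-α) :=
            mul_le_mul_of_nonneg_right (hbound c ⟨hc.1, hc.2.le⟩) (Real.rpow_nonneg hbc.le _)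
        _ = M * (b - c) ^ (β - α) := by
            rw [mul_assoc, ← Real.rpow_add hbc]; ring_nf
    · have h0 : Tendsto (fun c : ℝ => b - c) l (𝓝 0) := by
        have : Tendsto (fun c : ℝ => b - c) (𝓝 b) (𝓝 (b - b)) :=
          (continuous_const.sub continuous_id).tendsto b
        rw [sub_self] at this
        exact this.mono_left nhdsWithin_le_nhds
      have hrp : Tendsto (fun x : ℝ => x ^ (β - α)) (𝓝 0) (𝓝 ((0:ℝ) ^ (β - α))) :=
        (Real.continuousAt_rpow_const 0 (β - α) (Or.inr (by linarith))).tendsto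
      rw [Real.zero_rpow (by linarith : β - α ≠ 0)] at hrp
      have := (hrp.comp h0).const_mul M
      simpa using this
  have hR : Tendsto (fun c => e c * (b - c) ^ (-α)
      - α * ∫ t in a..c, e t * (b - t) ^ (-α-1)) l
      (𝓝 (0 - α * ∫ t in a..b, e t * (b - t) ^ (-α-1))) :=
    hbt.sub (hHb.const_mul α)
  have hL' : Tendsto (fun c => ∫ t in a..c, derivWithin e (Set.Ico a b) t * (b - t) ^ (-α)) l
      (𝓝 (0 - α * ∫ t in a..b, e t * (b - t) ^ (-α-1))) := by
    refine hR.congr' ?_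
    filter_upwards [self_mem_nhdsWithin] with c hc
    exact (key c hc).symm
  have := tendsto_nhds_unique hLb hL'
  rw [this]
  ring
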